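/- The function φ(x_1, x_2) = (1/2)(x_1 + x_2 - 1 + μ_1/λ_1)^2 + x_2 (μ_2/λ_2 - μ_1/λ_1) is nonnegative on the region {x_1 ≥ 0, x_2 ≥ 0}, vanishes only at the point (1 - μ_1/λ_1, 0), and along any solution of the deterministic SIS competition system with x_1, x_2 ≥ 0 its time derivative equals -λ_1 x_1 (x_1 + x_2 - 1 + μ_1/λ_1)^2 - λ_2 x_2 (x_1 + x_2 - 1 + μ_2/λ_2)^2 ≤ 0. -/

import Mathlib

/-- The Lyapunov function for the deterministic SIS competition system. -/
noncomputable def sisLyapunov (lam1 lam2 mu1 mu2 a b : ℝ) : ℝ :=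
  (1 / 2) * (a + b - 1 + mu1 / lam1) ^ 2 + b * (mu2 / lam2 - mu1 / lam1)

/-- `φ(x₁,x₂) = ½(x₁+x₂-1+μ₁/λ₁)² + x₂(μ₂/λ₂ - μ₁/λ₁)` is nonnegative on the first
quadrant, vanishes only at `(1-μ₁/λ₁, 0)`, and along solutions of the SIS competition
system its derivative is `-λ₁x₁(x₁+x₂-1+μ₁/λ₁)² - λ₂x₂(x₁+x₂-1+μ₂/λ₂)² ≤ 0`. -/
theorem sis_lyapunov_properties
    (lam1 lam2 mu1 mu2 : ℝ) (hlam2 : 0 < lam2) (hmu2 : 0 < mu2)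
    (hmu1 : 0 < mu1) (hlt : mu1 < lam1)
    (hratio : lam2 / mu2 < lam1 / mu1)
    (x1 x2 : ℝ → ℝ)
    (hx1 : ∀ t : ℝ, HasDerivAt x1 (lam1 * x1 t * (1 - x1 t - x2 t) - mu1 * x1 t) t)
    (hx2 : ∀ t : ℝ, HasDerivAt x2 (lam2 * x2 t * (1 - x1 t - x2 t) - mu2 * x2 t) t) :
    (∀ a b : ℝ, 0 ≤ a → 0 ≤ b → 0 ≤ sisLyapunov lam1 lam2 mu1 mu2 a b) ∧
    (∀ a b : ℝ, 0 ≤ a → 0 ≤ b →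
      (sisLyapunov lam1 lam2 mu1 mu2 a b = 0 ↔ a = 1 - mu1 / lam1 ∧ b = 0)) ∧
    (∀ t : ℝ,
      HasDerivAt (fun s => sisLyapunov lam1 lam2 mu1 mu2 (x1 s) (x2 s))
        (-(lam1 * x1 t * (x1 t + x2 t - 1 + mu1 / lam1) ^ 2)
          - lam2 * x2 t * (x1 t + x2 t - 1 + mu2 / lam2) ^ 2) t ∧
      (0 ≤ x1 t → 0 ≤ x2 t →
        -(lam1 * x1 t * (x1 t + x2 t - 1 + mu1 / lam1) ^ 2)
          - lam2 * x2 t * (x1 t + x2 t - 1 + mu2 / lam2) ^ 2 ≤ 0)) := by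
  have hlam1 : 0 < lam1 := hmu1.trans hlt
  have hc : 0 < mu2 / lam2 - mu1 / lam1 := by
    rw [sub_pos, div_lt_div_iff₀ hlam1 hlam2]
    rw [div_lt_div_iff₀ hmu2 hmu1] at hratio
    nlinarith
  refine ⟨?_, ?_, ?_⟩
  · intro a b ha hb
    unfold sisLyapunov
    have := sq_nonneg (a + b - 1 + mu1 / lam1)
    nlinarith
  · intro a b ha hb
    unfold sisLyapunov
    constructor
    · intro h
      have hs := sq_nonneg (a + b - 1 + mu1 / lam1)
      have hb0 : b = 0 := by nlinarith
      subst hb0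
      constructor
      · nlinarith
      · rfl
    · rintro ⟨h1, h2⟩
      subst h1; subst h2
      ring
  · intro t
    constructor
    · have hd := ((hx1 t).add (hx2 t)).add_const (-1 + mu1 / lam1)
      have hsq := (hd.pow 2).const_mul ((1:ℝ)/2)
      have hlin := (hx2 t).const_mul (mu2 / lam2 - mu1 / lam1)
      have := hsq.add hlin
      convert this.congr_deriv ?_ using 1
      · rfl
      · rfl
      · funext s
        simp [sisLyapunov]; ring
      · simp only [Pi.add_apply]
        norm_num
        field_simp
        ring
    · intro h1 h2
      have s1 : 0 ≤ lam1 * x1 t * (x1 t + x2 t - 1 + mu1 / lam1) ^ 2 :=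
        mul_nonneg (mul_nonneg hlam1.le h1) (sq_nonneg _)
      have s2 : 0 ≤ lam2 * x2 t * (x1 t + x2 t - 1 + mu2 / lam2) ^ 2 :=
        mul_nonneg (mul_nonneg hlam2.le h2) (sq_nonneg _)
      linarith
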